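/- Let A be a three-level block circulant matrix with rank-1 Hadamard separable blocks A_{k₁k₂k₃} = A^{(1)}_{k₁} ∘ A^{(2)}_{k₂} ∘ A^{(3)}_{k₃}. Then the set of eigenvalues of A equals the union over all multi-indices (j₁, j₂, j₃) with 0 ≤ j_ℓ ≤ L_ℓ − 1 of the sets of eigenvalues of the m₀×m₀ Hadamard products Ā^{(1)}_{j₁} ∘ Ā^{(2)}_{j₂} ∘ Ā^{(3)}_{j₃}, where Ā^{(ℓ)}_{j} = Σ_{k=0}^{L_ℓ−1} ω_{L_ℓ}^{jk} A^{(ℓ)}_{k}. -/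

import Mathlib

open Matrix Complex
open scoped Matrix Kronecker

noncomputable section

/-- `ω_L = exp(-2πi/L)`. -/
def omg (L : ℕ) : ℂ := Complex.exp (-(2 * Real.pi * Complex.I) / L)

/-- The cyclic downward shift matrix `π_L`. -/
def shiftMat (L : ℕ) : Matrix (Fin L) (Fin L) ℂ :=
  Matrix.of fun i j : Fin L => if (i : ℕ) = ((j : ℕ) + 1) % L then 1 else 0

lemma omg_ne_zero (L : ℕ) : omg L ≠ 0 := Complex.exp_ne_zero _

lemma omg_pow_L {L : ℕ} (hL : L ≠ 0) : omg L ^ L = 1 := by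
  rw [omg, ← Complex.exp_nat_mul]
  have : (L : ℂ) ≠ 0 := Nat.cast_ne_zero.mpr hL
  rw [mul_div_cancel₀ _ this,
    show -(2 * (Real.pi:ℂ) * Complex.I) = -(2 * Real.pi * Complex.I) by ring,
    Complex.exp_neg, Complex.exp_two_pi_mul_I]
  simp

lemma omg_prim {L : ℕ} (hL : L ≠ 0) : IsPrimitiveRoot (omg L) L := by
  have h := Complex.isPrimitiveRoot_exp L hL
  have : omg L = (Complex.exp (2 * Real.pi * Complex.I / L))⁻¹ := by
    rw [omg, ← Complex.exp_neg, neg_div]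
  rw [this]
  exact h.inv

lemma omg_pow_mod {L : ℕ} (hL : L ≠ 0) (a : ℕ) : omg L ^ (a % L) = omg L ^ a := by
  conv_rhs => rw [← Nat.div_add_mod a L]
  rw [pow_add, pow_mul, omg_pow_L hL, one_pow, one_mul]

lemma omg_val_add {L : ℕ} (hL : L ≠ 0) (j : ℕ) (a b : Fin L) :
    omg L ^ (j * ((a + b : Fin L) : ℕ)) = omg L ^ (j * (a : ℕ)) * omg L ^ (j * (b : ℕ)) := by
  rw [Fin.val_add, mul_comm j, pow_mul, omg_pow_mod hL, ← pow_mul, mul_comm _ j, mul_add, pow_add]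

lemma omg_sum_delta {L : ℕ} (hL : L ≠ 0) (n : ℕ) :
    ∑ t : Fin L, (omg L ^ n) ^ (t : ℕ) = if L ∣ n then (L : ℂ) else 0 := by
  split_ifs with h
  · obtain ⟨m, rfl⟩ := h
    simp [pow_mul, omg_pow_L hL]
  · have hne : omg L ^ n ≠ 1 := fun hc => h (((omg_prim hL).pow_eq_one_iff_dvd n).mp hc)
    rw [Fin.sum_univ_eq_sum_range (fun i => (omg L ^ n) ^ i), geom_sum_eq hne,
      ← pow_mul, mul_comm n L, pow_mul, omg_pow_L hL, one_pow]
    simp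

open Fin.CommRing in
lemma dft_inj {L : ℕ} (hL : L ≠ 0) (f : Fin L → ℂ)
    (h : ∀ j : Fin L, ∑ i : Fin L, omg L ^ ((j : ℕ) * (i : ℕ)) * f i = 0) (i₀ : Fin L) :
    f i₀ = 0 := by
  haveI : NeZero L := ⟨hL⟩
  have H : ∑ j : Fin L, ∑ i : Fin L,
      omg L ^ ((j : ℕ) * ((-i₀ : Fin L) : ℕ)) * (omg L ^ ((j : ℕ) * (i : ℕ)) * f i) = 0 := by
    calc ∑ j : Fin L, ∑ i : Fin L,
          omg L ^ ((j : ℕ) * ((-i₀ : Fin L) : ℕ)) * (omg L ^ ((j : ℕ) * (i : ℕ)) * f i)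
        = ∑ j : Fin L, omg L ^ ((j : ℕ) * ((-i₀ : Fin L) : ℕ)) *
            ∑ i : Fin L, omg L ^ ((j : ℕ) * (i : ℕ)) * f i :=
          Finset.sum_congr rfl fun j _ => (Finset.mul_sum _ _ _).symm
      _ = 0 := by simp [h]
  rw [Finset.sum_comm] at H
  have H2 : ∑ i : Fin L, (∑ j : Fin L, (omg L ^ (((-i₀ : Fin L) : ℕ) + (i : ℕ))) ^ (j : ℕ)) * f i
      = 0 := by
    rw [← H]
    refine Finset.sum_congr rfl fun i _ => ?_
    rw [Finset.sum_mul]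
    refine Finset.sum_congr rfl fun j _ => ?_
    rw [← pow_mul, mul_comm _ (j:ℕ), mul_add, pow_add, mul_assoc]
  have key : ∀ i : Fin L, (∑ j : Fin L, (omg L ^ (((-i₀ : Fin L) : ℕ) + (i : ℕ))) ^ (j : ℕ))
      = if i = i₀ then (L : ℂ) else 0 := by
    intro i
    rw [omg_sum_delta hL]
    congr 1
    rw [eq_iff_iff]
    have hv : ((-i₀ + i : Fin L) : ℕ) = (((-i₀ : Fin L):ℕ) + (i:ℕ)) % L := Fin.val_add _ _
    rw [Nat.dvd_iff_mod_eq_zero, ← hv]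
    constructor
    · intro h0
      exact (neg_add_eq_zero.mp (Fin.ext h0)).symm
    · intro hi
      rw [hi, show (-i₀ + i₀ : Fin L) = 0 by ring]; rfl
  have hfin : (L : ℂ) * f i₀ = 0 := by
    rw [← H2, Finset.sum_congr rfl fun i _ => by rw [key i]]
    simp
  exact (mul_eq_zero.mp hfin).resolve_left (Nat.cast_ne_zero.mpr hL)

lemma fin_val_add_one {L : ℕ} [NeZero L] (j : Fin L) :
    ((j + 1 : Fin L) : ℕ) = ((j : ℕ) + 1) % L := by
  rw [Fin.val_add, Fin.val_one']
  conv_rhs => rw [Nat.add_mod]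
  rw [Nat.mod_eq_of_lt j.isLt]

open Fin.CommRing in
lemma shift_pow_apply {L : ℕ} [NeZero L] (n : ℕ) (i j : Fin L) :
    (shiftMat L ^ n) i j = if j = i - (n : Fin L) then 1 else 0 := by
  induction n generalizing i j with
  | zero =>
    simp [Matrix.one_apply, eq_comm]
  | succ n ih =>
    rw [pow_succ, Matrix.mul_apply]
    have hterm : ∀ t : Fin L, (shiftMat L ^ n) i t * shiftMat L t j
        = if t = i - (n : Fin L) then shiftMat L t j else 0 := by
      intro t; rw [ih]; split_ifs <;> simp
    rw [Finset.sum_congr rfl fun t _ => hterm t, Finset.sum_ite_eq' Finset.univ _ _]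
    simp only [Finset.mem_univ, if_true]
    show (if ((i - (n : Fin L) : Fin L) : ℕ) = ((j : ℕ) + 1) % L then (1:ℂ) else 0) = _
    rw [← fin_val_add_one j]
    congr 1
    rw [eq_iff_iff, Fin.val_eq_val]
    constructor
    · intro h
      push_cast
      linear_combination -h
    · intro h
      push_cast at h
      linear_combination -h

section main

variable {L₁ L₂ L₃ m₀ : ℕ} [NeZero L₁] [NeZero L₂] [NeZero L₃]

/-- The Fourier weight on a triple index. -/
def wf (j i : (Fin L₁ × Fin L₂) × Fin L₃) : ℂ :=
  omg L₁ ^ ((j.1.1 : ℕ) * (i.1.1 : ℕ)) * (omg L₂ ^ ((j.1.2 : ℕ) * (i.1.2 : ℕ)) *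
    omg L₃ ^ ((j.2 : ℕ) * (i.2 : ℕ)))

lemma wf_add (j a b : (Fin L₁ × Fin L₂) × Fin L₃) : wf j (a + b) = wf j a * wf j b := by
  unfold wf
  have e1 := omg_val_add (NeZero.ne L₁) (j.1.1 : ℕ) a.1.1 b.1.1
  have e2 := omg_val_add (NeZero.ne L₂) (j.1.2 : ℕ) a.1.2 b.1.2
  have e3 := omg_val_add (NeZero.ne L₃) (j.2 : ℕ) a.2 b.2
  have c1 : (a + b).1.1 = a.1.1 + b.1.1 := rfl
  have c2 : (a + b).1.2 = a.1.2 + b.1.2 := rfl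
  have c3 : (a + b).2 = a.2 + b.2 := rfl
  rw [c1, c2, c3, e1, e2, e3]
  ring

lemma wf_zero (j : (Fin L₁ × Fin L₂) × Fin L₃) : wf j 0 = 1 := by
  unfold wf
  have c1 : ((0 : (Fin L₁ × Fin L₂) × Fin L₃).1.1 : ℕ) = 0 := rfl
  have c2 : ((0 : (Fin L₁ × Fin L₂) × Fin L₃).1.2 : ℕ) = 0 := rfl
  have c3 : ((0 : (Fin L₁ × Fin L₂) × Fin L₃).2 : ℕ) = 0 := rfl
  rw [c1, c2, c3]
  simp

lemma wf_ne_zero (j i : (Fin L₁ × Fin L₂) × Fin L₃) : wf j i ≠ 0 := by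
  unfold wf
  exact mul_ne_zero (pow_ne_zero _ (omg_ne_zero _))
    (mul_ne_zero (pow_ne_zero _ (omg_ne_zero _)) (pow_ne_zero _ (omg_ne_zero _)))

open Fin.CommRing in
lemma kron_mulVec {m₀ : ℕ}
    (k₁ : Fin L₁) (k₂ : Fin L₂) (k₃ : Fin L₃) (B : Matrix (Fin m₀) (Fin m₀) ℂ)
    (x : ((Fin L₁ × Fin L₂) × Fin L₃) × Fin m₀ → ℂ) (i₁ : Fin L₁) (i₂ : Fin L₂) (i₃ : Fin L₃)
    (p : Fin m₀) :
    (((shiftMat L₁ ^ (k₁:ℕ)) ⊗ₖ (shiftMat L₂ ^ (k₂:ℕ)) ⊗ₖ (shiftMat L₃ ^ (k₃:ℕ)) ⊗ₖ B) *ᵥ x)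
      (((i₁,i₂),i₃),p)
    = ∑ p' : Fin m₀, B p p' * x (((i₁-k₁,i₂-k₂),i₃-k₃),p') := by
  set_option synthInstance.maxHeartbeats 1000000 in
  simp [Matrix.mulVec, dotProduct, Fintype.sum_prod_type, kroneckerMap_apply,
    shift_pow_apply, Fin.cast_val_eq_self, ite_mul, mul_ite, mul_zero, zero_mul, one_mul,
    Finset.sum_ite_eq', Finset.sum_ite_eq]

variable (A₁ : Fin L₁ → Matrix (Fin m₀) (Fin m₀) ℂ)
  (A₂ : Fin L₂ → Matrix (Fin m₀) (Fin m₀) ℂ)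
  (A₃ : Fin L₃ → Matrix (Fin m₀) (Fin m₀) ℂ)

lemma sum_mulVec_apply {n : Type*} [Fintype n] {ι : Type*} (s : Finset ι)
    (M : ι → Matrix n n ℂ) (x : n → ℂ) (i : n) :
    ((∑ k ∈ s, M k) *ᵥ x) i = ∑ k ∈ s, (M k *ᵥ x) i := by
  simp [Matrix.mulVec, dotProduct, Matrix.sum_apply, Finset.sum_mul]
  exact Finset.sum_comm

lemma bigM_mulVec (x : ((Fin L₁ × Fin L₂) × Fin L₃) × Fin m₀ → ℂ)
    (i : (Fin L₁ × Fin L₂) × Fin L₃) (p : Fin m₀) :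
    ((∑ k₁ : Fin L₁, ∑ k₂ : Fin L₂, ∑ k₃ : Fin L₃,
      (shiftMat L₁ ^ (k₁ : ℕ)) ⊗ₖ (shiftMat L₂ ^ (k₂ : ℕ)) ⊗ₖ (shiftMat L₃ ^ (k₃ : ℕ))
        ⊗ₖ (A₁ k₁ ⊙ A₂ k₂ ⊙ A₃ k₃)) *ᵥ x) (i, p)
    = ∑ k : (Fin L₁ × Fin L₂) × Fin L₃, ∑ p' : Fin m₀,
        (A₁ k.1.1 ⊙ A₂ k.1.2 ⊙ A₃ k.2) p p' * x (i - k, p') := by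
  obtain ⟨⟨i₁, i₂⟩, i₃⟩ := i
  rw [sum_mulVec_apply]
  rw [Finset.sum_congr rfl fun k₁ _ => sum_mulVec_apply Finset.univ _ x _]
  rw [Finset.sum_congr rfl fun k₁ _ => Finset.sum_congr rfl fun k₂ _ =>
    sum_mulVec_apply Finset.univ _ x _]
  rw [Fintype.sum_prod_type, Fintype.sum_prod_type]
  refine Finset.sum_congr rfl fun k₁ _ => Finset.sum_congr rfl fun k₂ _ =>
    Finset.sum_congr rfl fun k₃ _ => ?_
  rw [kron_mulVec]
  rfl

lemma B_mulVec (j₁ : Fin L₁) (j₂ : Fin L₂) (j₃ : Fin L₃) (v : Fin m₀ → ℂ) (p : Fin m₀) :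
    (((∑ k : Fin L₁, omg L₁ ^ ((j₁ : ℕ) * (k : ℕ)) • A₁ k) ⊙
      (∑ k : Fin L₂, omg L₂ ^ ((j₂ : ℕ) * (k : ℕ)) • A₂ k) ⊙
      (∑ k : Fin L₃, omg L₃ ^ ((j₃ : ℕ) * (k : ℕ)) • A₃ k)) *ᵥ v) p
    = ∑ k : (Fin L₁ × Fin L₂) × Fin L₃, ∑ p' : Fin m₀,
        wf ((j₁,j₂),j₃) k * ((A₁ k.1.1 ⊙ A₂ k.1.2 ⊙ A₃ k.2) p p') * v p' := by
  have hB : ∀ p' : Fin m₀,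
      (((∑ k : Fin L₁, omg L₁ ^ ((j₁ : ℕ) * (k : ℕ)) • A₁ k) ⊙
        (∑ k : Fin L₂, omg L₂ ^ ((j₂ : ℕ) * (k : ℕ)) • A₂ k) ⊙
        (∑ k : Fin L₃, omg L₃ ^ ((j₃ : ℕ) * (k : ℕ)) • A₃ k)) p p')
      = ∑ k : (Fin L₁ × Fin L₂) × Fin L₃,
          wf ((j₁,j₂),j₃) k * ((A₁ k.1.1 ⊙ A₂ k.1.2 ⊙ A₃ k.2) p p') := by
    intro p'
    simp only [Matrix.hadamard_apply, Matrix.sum_apply, Matrix.smul_apply, smul_eq_mul,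
      Fintype.sum_prod_type, wf]
    rw [Finset.sum_mul_sum, Finset.sum_mul]
    refine Finset.sum_congr rfl fun k₁ _ => ?_
    rw [Finset.sum_mul]
    refine Finset.sum_congr rfl fun k₂ _ => ?_
    rw [Finset.mul_sum]
    exact Finset.sum_congr rfl fun k₃ _ => by ring
  rw [Matrix.mulVec, dotProduct]
  rw [Finset.sum_congr rfl fun p' _ => by rw [hB p']]
  rw [Finset.sum_congr rfl fun p' (_ : p' ∈ Finset.univ) => Finset.sum_mul Finset.univ _ (v p')]
  exact Finset.sum_comm

end main

/-- The eigenvalues of a three-level block circulant matrix with rank-1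
Hadamard-separable blocks `A_{k₁k₂k₃} = A^{(1)}_{k₁} ∘ A^{(2)}_{k₂} ∘ A^{(3)}_{k₃}`
are exactly the union, over multi-indices `(j₁,j₂,j₃)`, of the eigenvalues of
the Hadamard products `Ā^{(1)}_{j₁} ∘ Ā^{(2)}_{j₂} ∘ Ā^{(3)}_{j₃}`, where
`Ā^{(ℓ)}_j = Σ_k ω_{L_ℓ}^{jk} A^{(ℓ)}_k`. -/
theorem separable_bcirc_eigenvalues (L₁ L₂ L₃ m₀ : ℕ)
    (h₁ : 1 ≤ L₁) (h₂ : 1 ≤ L₂) (h₃ : 1 ≤ L₃)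
    (A₁ : Fin L₁ → Matrix (Fin m₀) (Fin m₀) ℂ)
    (A₂ : Fin L₂ → Matrix (Fin m₀) (Fin m₀) ℂ)
    (A₃ : Fin L₃ → Matrix (Fin m₀) (Fin m₀) ℂ) (lam : ℂ) :
    (∃ x : ((Fin L₁ × Fin L₂) × Fin L₃) × Fin m₀ → ℂ, x ≠ 0 ∧
        (∑ k₁ : Fin L₁, ∑ k₂ : Fin L₂, ∑ k₃ : Fin L₃,
          (shiftMat L₁ ^ (k₁ : ℕ)) ⊗ₖ (shiftMat L₂ ^ (k₂ : ℕ)) ⊗ₖ (shiftMat L₃ ^ (k₃ : ℕ))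
            ⊗ₖ (A₁ k₁ ⊙ A₂ k₂ ⊙ A₃ k₃)) *ᵥ x = lam • x) ↔
      ∃ j₁ : Fin L₁, ∃ j₂ : Fin L₂, ∃ j₃ : Fin L₃, ∃ u : Fin m₀ → ℂ, u ≠ 0 ∧
        ((∑ k : Fin L₁, omg L₁ ^ ((j₁ : ℕ) * (k : ℕ)) • A₁ k) ⊙
         (∑ k : Fin L₂, omg L₂ ^ ((j₂ : ℕ) * (k : ℕ)) • A₂ k) ⊙
         (∑ k : Fin L₃, omg L₃ ^ ((j₃ : ℕ) * (k : ℕ)) • A₃ k)) *ᵥ u = lam • u := by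
  haveI : NeZero L₁ := ⟨Nat.one_le_iff_ne_zero.mp h₁⟩
  haveI : NeZero L₂ := ⟨Nat.one_le_iff_ne_zero.mp h₂⟩
  haveI : NeZero L₃ := ⟨Nat.one_le_iff_ne_zero.mp h₃⟩
  constructor
  · rintro ⟨x, hx, hEq⟩
    have hpt : ∀ (i : (Fin L₁ × Fin L₂) × Fin L₃) (p : Fin m₀),
        ∑ k : (Fin L₁ × Fin L₂) × Fin L₃, ∑ p' : Fin m₀,
          (A₁ k.1.1 ⊙ A₂ k.1.2 ⊙ A₃ k.2) p p' * x (i - k, p') = lam * x (i, p) := by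
      intro i p
      rw [← bigM_mulVec A₁ A₂ A₃ x i p, hEq]
      simp
    set u : ((Fin L₁ × Fin L₂) × Fin L₃) → Fin m₀ → ℂ :=
      fun j p => ∑ i : (Fin L₁ × Fin L₂) × Fin L₃, wf j i * x (i, p) with hu
    have hueig : ∀ (j : (Fin L₁ × Fin L₂) × Fin L₃) (p : Fin m₀),
        ∑ k : (Fin L₁ × Fin L₂) × Fin L₃, ∑ p' : Fin m₀,
          wf j k * ((A₁ k.1.1 ⊙ A₂ k.1.2 ⊙ A₃ k.2) p p') * u j p' = lam * u j p := by
      intro j p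
      have step1 : ∀ (k : (Fin L₁ × Fin L₂) × Fin L₃) (p' : Fin m₀),
          (∑ i : (Fin L₁ × Fin L₂) × Fin L₃,
            wf j i * ((A₁ k.1.1 ⊙ A₂ k.1.2 ⊙ A₃ k.2) p p' * x (i - k, p')))
          = ∑ i : (Fin L₁ × Fin L₂) × Fin L₃,
              wf j k * ((A₁ k.1.1 ⊙ A₂ k.1.2 ⊙ A₃ k.2) p p') * (wf j i * x (i, p')) := by
        intro k p'
        rw [← Equiv.sum_comp (Equiv.addRight k) (fun i =>
          wf j i * ((A₁ k.1.1 ⊙ A₂ k.1.2 ⊙ A₃ k.2) p p' * x (i - k, p')))]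
        refine Finset.sum_congr rfl fun i _ => ?_
        simp only [Equiv.coe_addRight]
        rw [add_sub_cancel_right, wf_add]
        ring
      calc ∑ k : (Fin L₁ × Fin L₂) × Fin L₃, ∑ p' : Fin m₀,
            wf j k * ((A₁ k.1.1 ⊙ A₂ k.1.2 ⊙ A₃ k.2) p p') * u j p'
          = ∑ k : (Fin L₁ × Fin L₂) × Fin L₃, ∑ p' : Fin m₀,
              ∑ i : (Fin L₁ × Fin L₂) × Fin L₃,
                wf j k * ((A₁ k.1.1 ⊙ A₂ k.1.2 ⊙ A₃ k.2) p p') * (wf j i * x (i, p')) := by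
            refine Finset.sum_congr rfl fun k _ => Finset.sum_congr rfl fun p' _ => ?_
            simp only [hu]
            rw [Finset.mul_sum]
        _ = ∑ k : (Fin L₁ × Fin L₂) × Fin L₃, ∑ p' : Fin m₀,
              ∑ i : (Fin L₁ × Fin L₂) × Fin L₃,
                wf j i * ((A₁ k.1.1 ⊙ A₂ k.1.2 ⊙ A₃ k.2) p p' * x (i - k, p')) := by
            refine Finset.sum_congr rfl fun k _ => Finset.sum_congr rfl fun p' _ => ?_
            exact (step1 k p').symm
        _ = ∑ i : (Fin L₁ × Fin L₂) × Fin L₃,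
              wf j i * (∑ k : (Fin L₁ × Fin L₂) × Fin L₃, ∑ p' : Fin m₀,
                (A₁ k.1.1 ⊙ A₂ k.1.2 ⊙ A₃ k.2) p p' * x (i - k, p')) := by
            symm
            calc ∑ i : (Fin L₁ × Fin L₂) × Fin L₃,
                  wf j i * (∑ k : (Fin L₁ × Fin L₂) × Fin L₃, ∑ p' : Fin m₀,
                    (A₁ k.1.1 ⊙ A₂ k.1.2 ⊙ A₃ k.2) p p' * x (i - k, p'))
                = ∑ i : (Fin L₁ × Fin L₂) × Fin L₃, ∑ k : (Fin L₁ × Fin L₂) × Fin L₃,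
                    ∑ p' : Fin m₀,
                    wf j i * ((A₁ k.1.1 ⊙ A₂ k.1.2 ⊙ A₃ k.2) p p' * x (i - k, p')) := by
                  refine Finset.sum_congr rfl fun i _ => ?_
                  rw [Finset.mul_sum]
                  exact Finset.sum_congr rfl fun k _ => Finset.mul_sum _ _ _
              _ = ∑ k : (Fin L₁ × Fin L₂) × Fin L₃, ∑ i : (Fin L₁ × Fin L₂) × Fin L₃,
                    ∑ p' : Fin m₀,
                    wf j i * ((A₁ k.1.1 ⊙ A₂ k.1.2 ⊙ A₃ k.2) p p' * x (i - k, p')) :=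
                  Finset.sum_comm
              _ = ∑ k : (Fin L₁ × Fin L₂) × Fin L₃, ∑ p' : Fin m₀,
                    ∑ i : (Fin L₁ × Fin L₂) × Fin L₃,
                    wf j i * ((A₁ k.1.1 ⊙ A₂ k.1.2 ⊙ A₃ k.2) p p' * x (i - k, p')) :=
                  Finset.sum_congr rfl fun k _ => Finset.sum_comm
        _ = ∑ i : (Fin L₁ × Fin L₂) × Fin L₃, wf j i * (lam * x (i, p)) := by
            exact Finset.sum_congr rfl fun i _ => by rw [hpt i p]
        _ = lam * u j p := by
            rw [hu, Finset.mul_sum]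
            exact Finset.sum_congr rfl fun i _ => by ring
    have hnz : ∃ j : (Fin L₁ × Fin L₂) × Fin L₃, u j ≠ 0 := by
      by_contra hcon
      push_neg at hcon
      apply hx
      have h3 : ∀ (j₁ : Fin L₁) (j₂ : Fin L₂) (j₃ : Fin L₃) (p : Fin m₀),
          ∑ i₁ : Fin L₁, omg L₁ ^ ((j₁:ℕ)*(i₁:ℕ)) *
            (∑ i₂ : Fin L₂, omg L₂ ^ ((j₂:ℕ)*(i₂:ℕ)) *
              (∑ i₃ : Fin L₃, omg L₃ ^ ((j₃:ℕ)*(i₃:ℕ)) * x (((i₁,i₂),i₃), p))) = 0 := by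
        intro j₁ j₂ j₃ p
        have h0 := congrFun (hcon ((j₁,j₂),j₃)) p
        rw [hu] at h0
        simp only [Fintype.sum_prod_type, Pi.zero_apply] at h0
        rw [← h0]
        simp only [Finset.mul_sum]
        refine Finset.sum_congr rfl fun i₁ _ => Finset.sum_congr rfl fun i₂ _ =>
          Finset.sum_congr rfl fun i₃ _ => ?_
        simp only [wf]
        ring
      have h2 : ∀ (j₂ : Fin L₂) (j₃ : Fin L₃) (p : Fin m₀) (i₁ : Fin L₁),
          ∑ i₂ : Fin L₂, omg L₂ ^ ((j₂:ℕ)*(i₂:ℕ)) *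
            (∑ i₃ : Fin L₃, omg L₃ ^ ((j₃:ℕ)*(i₃:ℕ)) * x (((i₁,i₂),i₃), p)) = 0 :=
        fun j₂ j₃ p i₁ => dft_inj (NeZero.ne L₁) _ (fun j₁ => h3 j₁ j₂ j₃ p) i₁
      have h1 : ∀ (j₃ : Fin L₃) (p : Fin m₀) (i₁ : Fin L₁) (i₂ : Fin L₂),
          ∑ i₃ : Fin L₃, omg L₃ ^ ((j₃:ℕ)*(i₃:ℕ)) * x (((i₁,i₂),i₃), p) = 0 :=
        fun j₃ p i₁ i₂ => dft_inj (NeZero.ne L₂) _ (fun j₂ => h2 j₂ j₃ p i₁) i₂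
      funext ip
      obtain ⟨⟨⟨i₁, i₂⟩, i₃⟩, p⟩ := ip
      exact dft_inj (NeZero.ne L₃) _ (fun j₃ => h1 j₃ p i₁ i₂) i₃
    obtain ⟨j, hj⟩ := hnz
    refine ⟨j.1.1, j.1.2, j.2, u j, hj, ?_⟩
    funext p
    rw [B_mulVec, Pi.smul_apply, smul_eq_mul]
    have : ((j.1.1, j.1.2), j.2) = j := rfl
    rw [this]
    exact hueig j p
  · rintro ⟨j₁, j₂, j₃, u, hu, hEq⟩
    refine ⟨fun ip => wf ((j₁,j₂),j₃) (-ip.1) * u ip.2, ?_, ?_⟩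
    · obtain ⟨p, hp⟩ := Function.ne_iff.mp hu
      intro hzero
      apply hp
      have h0 := congrFun hzero ((0 : (Fin L₁ × Fin L₂) × Fin L₃), p)
      simp only [neg_zero, wf_zero, one_mul, Pi.zero_apply] at h0
      exact h0
    · funext ip
      obtain ⟨i, p⟩ := ip
      rw [Pi.smul_apply, smul_eq_mul, bigM_mulVec]
      have hEqp := congrFun hEq p
      rw [B_mulVec, Pi.smul_apply, smul_eq_mul] at hEqp
      calc ∑ k : (Fin L₁ × Fin L₂) × Fin L₃, ∑ p' : Fin m₀,
            (A₁ k.1.1 ⊙ A₂ k.1.2 ⊙ A₃ k.2) p p' * (wf ((j₁,j₂),j₃) (-(i - k)) * u p')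
          = ∑ k : (Fin L₁ × Fin L₂) × Fin L₃, ∑ p' : Fin m₀,
              wf ((j₁,j₂),j₃) (-i) *
                (wf ((j₁,j₂),j₃) k * ((A₁ k.1.1 ⊙ A₂ k.1.2 ⊙ A₃ k.2) p p') * u p') := by
            refine Finset.sum_congr rfl fun k _ => Finset.sum_congr rfl fun p' _ => ?_
            rw [show -(i - k) = -i + k by abel, wf_add]
            ring
        _ = wf ((j₁,j₂),j₃) (-i) * ∑ k : (Fin L₁ × Fin L₂) × Fin L₃, ∑ p' : Fin m₀,
              wf ((j₁,j₂),j₃) k * ((A₁ k.1.1 ⊙ A₂ k.1.2 ⊙ A₃ k.2) p p') * u p' := by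
            rw [Finset.mul_sum]
            exact Finset.sum_congr rfl fun k _ => (Finset.mul_sum _ _ _).symm
        _ = wf ((j₁,j₂),j₃) (-i) * (lam * u p) := by rw [hEqp]
        _ = lam * (wf ((j₁,j₂),j₃) (-i) * u p) := by ring
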